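/- Let 0 → V1 → V2 → V3 → 0 be an exact sequence of finite-dimensional K-vector spaces and let L2 be an O-lattice in V2. Then the preimage L1 of L2 in V1 (equivalently, L2 ∩ V1, viewing V1 as a subspace of V2) is an O-lattice in V1, the image L3 of L2 in V3 is an O-lattice in V3, all three lattices are finite free O-modules, and the resulting short exact sequence 0 → L1 → L2 → L3 → 0 of O-modules splits. -/

import Mathlib

open Submodule Set

section Aux

variable {O : Type*} [CommRing O] [IsDomain O] [ValuationRing O]
  {K : Type*} [Field K] [Algebra O K] [IsFractionRing O K]
  {V : Type*} [AddCommGroup V] [Module K V] [Module O V] [IsScalarTower O K V]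

lemma aux_exists_dvd_min {ι : Type*} (s : Finset ι) (hs : s.Nonempty) (c : ι → O) :
    ∃ j ∈ s, ∀ i ∈ s, c j ∣ c i := by
  classical
  induction s using Finset.induction_on with
  | empty => exact absurd hs (by simp)
  | @insert a t hnot ih =>
    rcases t.eq_empty_or_nonempty with rfl | ht
    · exact ⟨a, by simp, by simp⟩
    · obtain ⟨j, hj, hjall⟩ := ih ht
      rcases ValuationRing.dvd_total (c a) (c j) with h | h
      · exact ⟨a, Finset.mem_insert_self _ _, by
          intro i hi
          rcases Finset.mem_insert.mp hi with rfl | hi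
          · exact dvd_rfl
          · exact h.trans (hjall i hi)⟩
      · exact ⟨j, Finset.mem_insert_of_mem hj, by
          intro i hi
          rcases Finset.mem_insert.mp hi with rfl | hi
          · exact h
          · exact hjall i hi⟩

lemma aux_exists_li_span :
    ∀ (n : ℕ) (v : Fin n → V), ∃ (m : ℕ) (w : Fin m → V),
      span O (range w) = span O (range v) ∧ LinearIndependent K w := by
  intro n
  induction n using Nat.strong_induction_on with
  | _ n ih =>
  intro v
  by_cases hv : LinearIndependent K v
  · exact ⟨n, v, rfl, hv⟩
  obtain ⟨g, hsum, i₀, hi₀⟩ := Fintype.not_linearIndependent_iff.mp hv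
  obtain ⟨b, hb⟩ := IsLocalization.exist_integer_multiples_of_finite (nonZeroDivisors O) g
  choose c hc using hb
  have hbK : algebraMap O K (b : O) ≠ 0 :=
    IsFractionRing.to_map_ne_zero_of_mem_nonZeroDivisors b.2
  have hcsum : ∑ i, c i • v i = 0 := by
    have : ∀ i, c i • v i = algebraMap O K (b : O) • (g i • v i) := by
      intro i
      rw [← algebraMap_smul (R := O) K (c i) (v i), hc i]
      simp [Algebra.smul_def, mul_smul]
    simp_rw [this, ← Finset.smul_sum, hsum, smul_zero]
  have hci₀ : c i₀ ≠ 0 := by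
    intro h
    apply hi₀
    have := hc i₀
    rw [h, map_zero] at this
    have : algebraMap O K (b : O) * g i₀ = 0 := by
      rw [Algebra.smul_def] at this; exact this.symm
    rcases mul_eq_zero.mp this with h' | h'
    · exact absurd h' hbK
    · exact h'
  obtain ⟨j, -, hj⟩ := aux_exists_dvd_min Finset.univ ⟨i₀, Finset.mem_univ _⟩ c
  have hcj : c j ≠ 0 := by
    intro h
    apply hci₀
    obtain ⟨d, hd⟩ := hj i₀ (Finset.mem_univ _)
    rw [hd, h, zero_mul]
  choose d hd using fun i => hj i (Finset.mem_univ i)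
  have hdsum : ∑ i, d i • v i = 0 := by
    have h1 : algebraMap O K (c j) • (∑ i, d i • v i) = 0 := by
      rw [Finset.smul_sum]
      rw [← hcsum]
      refine Finset.sum_congr rfl fun i _ => ?_
      rw [algebraMap_smul, ← mul_smul, ← hd i]
    have hcjK : algebraMap O K (c j) ≠ 0 := by
      simpa using (map_ne_zero_iff _ (IsFractionRing.injective O K)).mpr hcj
    exact (smul_eq_zero.mp h1).resolve_left hcjK
  have hdj : d j = 1 := by
    have := hd j
    have h2 : c j * 1 = c j * d j := by rw [mul_one]; exact this
    exact (mul_left_cancel₀ hcj h2).symm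
  -- n = n' + 1
  have hn : n ≠ 0 := by rintro rfl; exact i₀.elim0
  obtain ⟨n', rfl⟩ : ∃ n', n = n' + 1 := ⟨n - 1, (Nat.succ_pred_eq_of_pos (Nat.pos_of_ne_zero hn)).symm⟩
  set v' : Fin n' → V := v ∘ j.succAbove with hv'
  have hspan : span O (range v') = span O (range v) := by
    apply le_antisymm
    · exact span_mono (by rintro _ ⟨i, rfl⟩; exact ⟨j.succAbove i, rfl⟩)
    · rw [span_le]
      rintro _ ⟨i, rfl⟩
      by_cases hij : i = j
      · subst hij
        have hmem : ∀ k ∈ Finset.univ.erase i, v k ∈ span O (range v') := by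
          intro k hk
          obtain ⟨l, hl⟩ := Fin.exists_succAbove_eq (Finset.ne_of_mem_erase hk)
          exact subset_span ⟨l, by simp [hv', hl]⟩
        have heq : v i = -∑ k ∈ Finset.univ.erase i, d k • v k := by
          have h := hdsum
          rw [← Finset.add_sum_erase _ _ (Finset.mem_univ i), hdj, one_smul] at h
          exact eq_neg_of_add_eq_zero_left h
        rw [heq]
        exact neg_mem (sum_mem fun k hk => smul_mem _ _ (hmem k hk))
      · obtain ⟨k, hk⟩ := Fin.exists_succAbove_eq hij
        exact subset_span ⟨k, by simp [hv', hk]⟩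
  obtain ⟨m, w, hw1, hw2⟩ := ih n' (Nat.lt_succ_self n') v'
  exact ⟨m, w, hw1.trans hspan, hw2⟩

end Aux

section Aux2

variable {O : Type*} [CommRing O] [IsDomain O] [ValuationRing O]
  {K : Type*} [Field K] [Algebra O K] [IsFractionRing O K]
  {V : Type*} [AddCommGroup V] [Module K V] [Module O V] [IsScalarTower O K V]

include K in
lemma aux_free_of_fg (L : Submodule O V) (hL : L.FG) :
    Module.Free O L ∧ Module.Finite O L := by
  obtain ⟨n, v, hv⟩ := Submodule.fg_iff_exists_fin_generating_family.mp hL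
  have hli : ∃ (m : ℕ) (w : Fin m → V),
      span O (range w) = span O (range v) ∧ LinearIndependent K w := aux_exists_li_span n v
  obtain ⟨m, w, hw1, hw2⟩ := hli
  have hwO : LinearIndependent O w :=
    LinearIndependent.restrict_scalars (R := O) (K := K)
      (by simpa only [Algebra.smul_def, mul_one] using IsFractionRing.injective O K) hw2
  have hL' : span O (range w) = L := hw1.trans hv
  let b : Module.Basis (Fin m) O L := (Module.Basis.span hwO).map (LinearEquiv.ofEq _ _ hL')
  exact ⟨Module.Free.of_basis b, Module.Finite.of_basis b⟩

lemma aux_exists_denom {M : Submodule O V} {x : V} (hx : x ∈ span K (M : Set V)) :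
    ∃ a : O, a ≠ 0 ∧ a • x ∈ M := by
  induction hx using Submodule.span_induction with
  | mem y hy => exact ⟨1, one_ne_zero, by simpa⟩
  | zero => exact ⟨1, one_ne_zero, by simp⟩
  | add y z _ _ hy hz =>
    obtain ⟨a, ha, hay⟩ := hy
    obtain ⟨b, hb, hbz⟩ := hz
    refine ⟨a * b, mul_ne_zero ha hb, ?_⟩
    rw [smul_add]
    have h1 : (a * b) • y = b • (a • y) := by rw [mul_comm, mul_smul]
    have h2 : (a * b) • z = a • (b • z) := by rw [mul_smul]
    rw [h1, h2]
    exact M.add_mem (M.smul_mem _ hay) (M.smul_mem _ hbz)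
  | smul k y _ hy =>
    obtain ⟨a, ha, hay⟩ := hy
    obtain ⟨⟨cn, cd⟩, hc⟩ := IsLocalization.surj (nonZeroDivisors O) k
    refine ⟨(cd : O) * a, mul_ne_zero (nonZeroDivisors.coe_ne_zero cd) ha, ?_⟩
    have : ((cd : O) * a) • (k • y) = cn • (a • y) := by
      rw [← algebraMap_smul (R := O) K ((cd : O) * a), smul_smul, map_mul]
      have : algebraMap O K (cd : O) * algebraMap O K a * k
          = algebraMap O K cn * algebraMap O K a := by
        rw [mul_comm (algebraMap O K (cd : O)), mul_assoc, mul_comm (algebraMap O K (cd:O)), hc]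
        ring
      rw [this, ← map_mul, algebraMap_smul, mul_smul]
    rw [this]
    exact M.smul_mem _ hay

end Aux2


/-- Let `0 → V1 → V2 → V3 → 0` be an exact sequence of finite-dimensional
vector spaces over the fraction field `K` of a valuation ring `O`, and `L2` an `O`-lattice
in `V2`.  Then the preimage `L1` of `L2` in `V1` and the image `L3` of `L2` in `V3` are
`O`-lattices, all three lattices are finite free `O`-modules, and the resulting short exact
sequence `0 → L1 → L2 → L3 → 0` of `O`-modules splits. -/
theorem statement10 {O : Type*} [CommRing O] [IsDomain O] [ValuationRing O]
    {K : Type*} [Field K] [Algebra O K] [IsFractionRing O K]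
    {V1 V2 V3 : Type*}
    [AddCommGroup V1] [Module K V1] [Module O V1] [IsScalarTower O K V1]
    [AddCommGroup V2] [Module K V2] [Module O V2] [IsScalarTower O K V2]
    [AddCommGroup V3] [Module K V3] [Module O V3] [IsScalarTower O K V3]
    [FiniteDimensional K V1] [FiniteDimensional K V2] [FiniteDimensional K V3]
    (f : V1 →ₗ[K] V2) (g : V2 →ₗ[K] V3)
    (hf : Function.Injective f) (hg : Function.Surjective g)
    (hfg : LinearMap.range f = LinearMap.ker g)
    (L2 : Submodule O V2)
    (hL2 : L2.FG ∧ Submodule.span K (L2 : Set V2) = ⊤) :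
    let L1 : Submodule O V1 := Submodule.comap (f.restrictScalars O) L2
    let L3 : Submodule O V3 := Submodule.map (g.restrictScalars O) L2
    (L1.FG ∧ Submodule.span K (L1 : Set V1) = ⊤) ∧
    (L3.FG ∧ Submodule.span K (L3 : Set V3) = ⊤) ∧
    (Module.Finite O L1 ∧ Module.Free O L1) ∧
    (Module.Finite O L2 ∧ Module.Free O L2) ∧
    (Module.Finite O L3 ∧ Module.Free O L3) ∧
    (Function.Injective
        ⇑((f.restrictScalars O).restrict (p := L1) (q := L2) fun x hx => hx) ∧
      Function.Surjective
        ⇑((g.restrictScalars O).restrict (p := L2) (q := L3) fun x hx =>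
            Submodule.mem_map_of_mem hx) ∧
      LinearMap.range ((f.restrictScalars O).restrict (p := L1) (q := L2) fun x hx => hx) =
        LinearMap.ker ((g.restrictScalars O).restrict (p := L2) (q := L3) fun x hx =>
          Submodule.mem_map_of_mem hx)) ∧
    ∃ h : ↥L2 →ₗ[O] ↥L1,
      h.comp ((f.restrictScalars O).restrict (p := L1) (q := L2) fun x hx => hx) =
        LinearMap.id := by
  intro L1 L3
  obtain ⟨hL2fg, hL2span⟩ := hL2
  set f' : ↥L1 →ₗ[O] ↥L2 :=
    (f.restrictScalars O).restrict (p := L1) (q := L2) fun x hx => hx with hf'def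
  set g' : ↥L2 →ₗ[O] ↥L3 :=
    (g.restrictScalars O).restrict (p := L2) (q := L3) fun x hx =>
      Submodule.mem_map_of_mem hx with hg'def
  -- basic coercion facts
  have hf'val : ∀ x : L1, (f' x : V2) = f (x : V1) := fun x => rfl
  have hg'val : ∀ x : L2, (g' x : V3) = g (x : V2) := fun x => rfl
  -- L3 is a lattice
  have hL3fg : L3.FG := hL2fg.map (g.restrictScalars O)
  have hL3span : Submodule.span K (L3 : Set V3) = ⊤ := by
    have : (L3 : Set V3) = g '' (L2 : Set V2) := rfl
    rw [this, Submodule.span_image, hL2span, Submodule.map_top, LinearMap.range_eq_top.mpr hg]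
  -- L1 spans V1
  have hL1span : Submodule.span K (L1 : Set V1) = ⊤ := by
    rw [eq_top_iff]
    intro v _
    have hfv : f v ∈ Submodule.span K (L2 : Set V2) := by rw [hL2span]; trivial
    obtain ⟨a, ha, hav⟩ := aux_exists_denom hfv
    have hmem : a • v ∈ L1 := by
      show f (a • v) ∈ L2
      rw [← algebraMap_smul (R := O) K a v, map_smul, algebraMap_smul]
      exact hav
    have haK : (algebraMap O K a) ≠ 0 :=
      (map_ne_zero_iff _ (IsFractionRing.injective O K)).mpr ha
    have : v = (algebraMap O K a)⁻¹ • (a • v) := by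
      rw [← algebraMap_smul (R := O) K a v, ← smul_assoc, smul_eq_mul,
        inv_mul_cancel₀ haK, one_smul]
    rw [this]
    exact Submodule.smul_mem _ _ (Submodule.subset_span hmem)
  -- exactness of the restricted sequence
  have hf'inj : Function.Injective f' := by
    intro x y hxy
    exact Subtype.ext (hf (congrArg Subtype.val hxy))
  have hg'surj : Function.Surjective g' := by
    rintro ⟨y, x, hx, rfl⟩
    exact ⟨⟨x, hx⟩, rfl⟩
  have hrange : LinearMap.range f' = LinearMap.ker g' := by
    ext x
    constructor
    · rintro ⟨y, rfl⟩
      have : f (y : V1) ∈ LinearMap.ker g := by rw [← hfg]; exact ⟨y, rfl⟩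
      exact Subtype.ext (by simpa [hg'val, hf'val] using this)
    · intro hx
      have hgx : g (x : V2) = 0 := congrArg Subtype.val hx
      have : (x : V2) ∈ LinearMap.range f := by rw [hfg]; exact hgx
      obtain ⟨y, hy⟩ := this
      have hyL1 : y ∈ L1 := by show f y ∈ L2; rw [hy]; exact x.2
      exact ⟨⟨y, hyL1⟩, Subtype.ext hy⟩
  -- free/finite for L2, L3
  obtain ⟨hL2free, hL2fin⟩ := aux_free_of_fg (K := K) L2 hL2fg
  obtain ⟨hL3free, hL3fin⟩ := aux_free_of_fg (K := K) L3 hL3fg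
  -- splitting
  haveI := hL3free
  haveI := hL2fin
  obtain ⟨s, hs⟩ := Module.projective_lifting_property g' LinearMap.id hg'surj
  let p : ↥L2 →ₗ[O] ↥L2 := LinearMap.id - s.comp g'
  have hp : ∀ x, p x ∈ LinearMap.range f' := by
    intro x
    rw [hrange, LinearMap.mem_ker]
    have : g' (p x) = g' x - g' (s (g' x)) := by simp [p, map_sub]
    rw [this]
    have : g' (s (g' x)) = g' x := congrFun (congrArg DFunLike.coe hs) (g' x)
    rw [this, sub_self]
  let e := LinearEquiv.ofInjective f' hf'inj
  let h : ↥L2 →ₗ[O] ↥L1 := e.symm.toLinearMap.comp (p.codRestrict (LinearMap.range f') hp)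
  have hhf' : h.comp f' = LinearMap.id := by
    apply LinearMap.ext
    intro y
    have hpf : p (f' y) = f' y := by
      have h0 : g' (f' y) = 0 := by
        rw [← LinearMap.mem_ker, ← hrange]; exact ⟨y, rfl⟩
      simp [p, h0]
    show e.symm ⟨p (f' y), hp (f' y)⟩ = y
    rw [LinearEquiv.symm_apply_eq]
    exact Subtype.ext (by simp [e, hpf, LinearEquiv.ofInjective_apply])
  have hhsurj : Function.Surjective h := by
    intro y
    exact ⟨f' y, congrFun (congrArg DFunLike.coe hhf') y⟩
  have hL1fin : Module.Finite O L1 := Module.Finite.of_surjective h hhsurj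
  have hL1fg : L1.FG := by
    rw [← Module.Finite.iff_fg]; exact hL1fin
  obtain ⟨hL1free, _⟩ := aux_free_of_fg (K := K) L1 hL1fg
  exact ⟨⟨hL1fg, hL1span⟩, ⟨hL3fg, hL3span⟩, ⟨hL1fin, hL1free⟩, ⟨hL2fin, hL2free⟩,
    ⟨hL3fin, hL3free⟩, ⟨hf'inj, hg'surj, hrange⟩, ⟨h, hhf'⟩⟩
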